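/- Let q(t) ∈ M_n(ℤ[t]) be a matrix polynomial with det q(0) = ±1, let c(t) be its adjugate, and let p(t) ∈ M_n(ℤ[t]). Suppose every entry of the formal power series q(t)^{-1} p(t) ∈ M_n(ℤ[[t]]) has nonnegative coefficients, and suppose p(t) and q(t) have no common roots (λ is a root of a matrix polynomial r(t) if det r(λ) = 0). Then the set of roots of q(t) equals the union over i,j of the sets of poles of the rational functions (q(t)^{-1}p(t))_{ij}. -/

import Mathlib

/-- The canonical ring homomorphism `ℤ[t] → ℚ(t)`. -/
noncomputable def intPolyToRat : Polynomial ℤ →+* RatFunc ℚ :=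
  (algebraMap (Polynomial ℚ) (RatFunc ℚ)).comp (Polynomial.mapRingHom (Int.castRingHom ℚ))

/-- Let `q(t) ∈ M_n(ℤ[t])` with `det q(0) = ±1` and `p(t) ∈ M_n(ℤ[t])`, and let
`h(t) = q(t)⁻¹ p(t)`, a matrix of rational functions.  Suppose every entry of `h(t)`, as a
formal (Laurent/power) series, has nonnegative coefficients, and that `p` and `q` have no
common root in `ℂ` (where `λ` is a root of a matrix polynomial `r(t)` iff `det r(λ) = 0`).
Then the set of roots of `q(t)` equals the union over `i, j` of the sets of poles of the
rational functions `h(t)_{ij}` (the roots of the reduced denominator of each entry). -/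
theorem roots_eq_union_of_poles (n : ℕ)
    (p q : Matrix (Fin n) (Fin n) (Polynomial ℤ))
    (hq0 : q.det.eval 0 = 1 ∨ q.det.eval 0 = -1)
    (hnn : ∀ i j, ∀ k : ℤ,
      0 ≤ ((((q.map ⇑intPolyToRat)⁻¹ * p.map ⇑intPolyToRat) i j : RatFunc ℚ)
        : LaurentSeries ℚ).coeff k)
    (hnocommon : ¬∃ z : ℂ, (q.det.map (Int.castRingHom ℂ)).IsRoot z ∧
      (p.det.map (Int.castRingHom ℂ)).IsRoot z) :
    {z : ℂ | (q.det.map (Int.castRingHom ℂ)).IsRoot z} =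
      ⋃ (i : Fin n) (j : Fin n),
        {z : ℂ | (Polynomial.map (algebraMap ℚ ℂ)
          (RatFunc.denom (((q.map ⇑intPolyToRat)⁻¹ * p.map ⇑intPolyToRat) i j))).IsRoot z} := by
  classical
  set A := algebraMap (Polynomial ℚ) (RatFunc ℚ) with hA
  set φ := Polynomial.mapRingHom (Int.castRingHom ℚ) with hφ
  have hφinj : Function.Injective φ := Polynomial.map_injective _ Int.cast_injective
  set Q : Matrix (Fin n) (Fin n) (Polynomial ℚ) := q.map ⇑φ with hQ
  set P : Matrix (Fin n) (Fin n) (Polynomial ℚ) := p.map ⇑φ with hP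
  have hqmap : q.map ⇑intPolyToRat = (Q.map ⇑A) := by
    rw [hQ, Matrix.map_map]; rfl
  have hpmap : p.map ⇑intPolyToRat = (P.map ⇑A) := by
    rw [hP, Matrix.map_map]; rfl
  have hdetq : q.det ≠ 0 := by
    intro h
    rw [h] at hq0; simp at hq0
  have hdetQ : Q.det = φ q.det := (RingHom.map_det φ q).symm
  have hdetQ0 : Q.det ≠ 0 := by
    rw [hdetQ]
    exact fun h => hdetq (hφinj (by simpa using h))
  have hdetmap : (Q.map ⇑A).det = A Q.det := (RingHom.map_det A Q).symm
  have hdet0 : (Q.map ⇑A).det ≠ 0 := by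
    rw [hdetmap]; exact RatFunc.algebraMap_ne_zero hdetQ0
  have hunit : IsUnit (Q.map ⇑A).det := hdet0.isUnit
  set H := (q.map ⇑intPolyToRat)⁻¹ * p.map ⇑intPolyToRat with hH
  -- key identity over ℂ-coefficients: map of det of Q equals map of det q
  have hmapdetq : Polynomial.map (algebraMap ℚ ℂ) Q.det = q.det.map (Int.castRingHom ℂ) := by
    rw [hdetQ, hφ, Polynomial.coe_mapRingHom, Polynomial.map_map]
    congr 1
  have hdetP : P.det = φ p.det := (RingHom.map_det φ p).symm
  have hmapdetp : Polynomial.map (algebraMap ℚ ℂ) P.det = p.det.map (Int.castRingHom ℂ) := by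
    rw [hdetP, hφ, Polynomial.coe_mapRingHom, Polynomial.map_map]
    congr 1
  -- Q (mapped) * H = P (mapped)
  have hmulH : (Q.map ⇑A) * H = P.map ⇑A := by
    rw [hH, hqmap, hpmap, ← Matrix.mul_assoc, Matrix.mul_nonsing_inv _ hunit, Matrix.one_mul]
  -- entrywise formula for H
  set_option synthInstance.maxHeartbeats 1000000 in
  have hadjH : (Q.adjugate * P).map ⇑A = A Q.det • H := by
    have hadj : (Q.map ⇑A).adjugate = Q.adjugate.map ⇑A := (RingHom.map_adjugate A Q).symm
    calc (Q.adjugate * P).map ⇑A = Q.adjugate.map ⇑A * P.map ⇑A := Matrix.map_mul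
      _ = (Q.map ⇑A).adjugate * ((Q.map ⇑A) * H) := by rw [hadj, hmulH]
      _ = ((Q.map ⇑A).adjugate * (Q.map ⇑A)) * H := by rw [Matrix.mul_assoc]
      _ = ((Q.map ⇑A).det • (1 : Matrix (Fin n) (Fin n) (RatFunc ℚ))) * H := by
          rw [Matrix.adjugate_mul]
      _ = A Q.det • H := by rw [hdetmap, Matrix.smul_mul, Matrix.one_mul]
  have hentry : ∀ i j, H i j = A ((Q.adjugate * P) i j) / A Q.det := by
    intro i j
    have h1 : A ((Q.adjugate * P) i j) = A Q.det * H i j := by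
      have := congrFun (congrFun hadjH i) j
      simpa [Matrix.map_apply, Matrix.smul_apply, smul_eq_mul] using this
    rw [h1, mul_div_cancel_left₀ _ (RatFunc.algebraMap_ne_zero hdetQ0)]
  have hdvd : ∀ i j, (H i j).denom ∣ Q.det := fun i j =>
    (RatFunc.denom_dvd hdetQ0).mpr ⟨(Q.adjugate * P) i j, hentry i j⟩
  apply Set.eq_of_subset_of_subset
  · -- roots of q ⊆ union of poles
    intro z hz
    by_contra hnin
    simp only [Set.mem_iUnion, Set.mem_setOf_eq, not_exists] at hnin
    -- evaluation ring hom at z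
    set ψ : Polynomial ℚ →+* ℂ := Polynomial.eval₂RingHom (algebraMap ℚ ℂ) z with hψ
    have hψ_eval : ∀ r : Polynomial ℚ, ψ r = (r.map (algebraMap ℚ ℂ)).eval z := by
      intro r
      rw [Polynomial.eval_map]; rfl
    have hψQ : ψ Q.det = 0 := by
      rw [hψ_eval, hmapdetq]; exact hz
    set d : Polynomial ℚ := ∏ i : Fin n, ∏ j : Fin n, (H i j).denom with hd
    have hψd : ψ d ≠ 0 := by
      rw [hd, map_prod]
      apply Finset.prod_ne_zero_iff.mpr
      intro i _
      rw [map_prod]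
      apply Finset.prod_ne_zero_iff.mpr
      intro j _
      rw [hψ_eval]
      exact hnin i j
    have hdvd2 : ∀ i j, (H i j).denom ∣ d := by
      intro i j
      refine dvd_trans ?_ (Finset.dvd_prod_of_mem
        (fun i' => ∏ j' : Fin n, (H i' j').denom) (Finset.mem_univ i))
      exact Finset.dvd_prod_of_mem (fun j' => (H i j').denom) (Finset.mem_univ j)
    choose g hg using fun i j => hdvd2 i j
    set G : Matrix (Fin n) (Fin n) (Polynomial ℚ) :=
      Matrix.of fun i j => (H i j).num * g i j with hG
    have haG : ∀ i j, A (G i j) = A d * H i j := by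
      intro i j
      have hden0 : A (H i j).denom ≠ 0 :=
        RatFunc.algebraMap_ne_zero (RatFunc.denom_ne_zero _)
      have e1 : A (H i j).denom * H i j = A (H i j).num := by
        rw [mul_comm]
        exact (eq_div_iff hden0).mp (RatFunc.num_div_denom (H i j)).symm
      calc A (G i j) = A (H i j).num * A (g i j) := map_mul A _ _
        _ = (A (H i j).denom * H i j) * A (g i j) := by rw [e1]
        _ = (A (H i j).denom * A (g i j)) * H i j := by ring
        _ = A d * H i j := by rw [← map_mul, ← hg i j]
    have hkey : Q * G = d • P := by
      refine Matrix.ext fun i j => RatFunc.algebraMap_injective (K := ℚ) ?_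
      have h1 : A ((Q * G) i j) = ∑ k, A (Q i k) * A (G k j) := by
        rw [Matrix.mul_apply, map_sum]
        exact Finset.sum_congr rfl fun k _ => map_mul A _ _
      rw [h1]
      have h2 : ∀ k, A (Q i k) * A (G k j) = A d * ((Q.map ⇑A) i k * H k j) := by
        intro k
        rw [haG]
        simp [Matrix.map_apply]
        ring
      rw [Finset.sum_congr rfl fun k _ => h2 k, ← Finset.mul_sum]
      have h3 : ∑ k, (Q.map ⇑A) i k * H k j = (P.map ⇑A) i j := by
        rw [← Matrix.mul_apply, hmulH]
      rw [h3]
      simp [Matrix.smul_apply, Matrix.map_apply, smul_eq_mul, map_mul]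
      rfl
    have hdet : Q.det * G.det = d ^ n * P.det := by
      have := congrArg Matrix.det hkey
      rw [Matrix.det_mul, Matrix.det_smul] at this
      simpa using this
    have hψP : ψ P.det = 0 := by
      have := congrArg ψ hdet
      rw [map_mul, hψQ, zero_mul, map_mul, map_pow] at this
      rcases mul_eq_zero.mp this.symm with h | h
      · exact absurd h (pow_ne_zero n hψd)
      · exact h
    have hrootp : (p.det.map (Int.castRingHom ℂ)).IsRoot z := by
      have h0 : Polynomial.eval z (Polynomial.map (algebraMap ℚ ℂ) P.det) = 0 := by
        rw [← hψ_eval]; exact hψP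
      rw [← hmapdetp]; exact h0
    exact hnocommon ⟨z, hz, hrootp⟩
  · -- union of poles ⊆ roots of q
    intro z hz
    simp only [Set.mem_iUnion, Set.mem_setOf_eq] at hz
    obtain ⟨i, j, hij⟩ := hz
    have : (H i j).denom ∣ Q.det := hdvd i j
    have hmapdvd : Polynomial.map (algebraMap ℚ ℂ) (H i j).denom ∣
        Polynomial.map (algebraMap ℚ ℂ) Q.det :=
      Polynomial.map_dvd _ this
    have := hij.dvd hmapdvd
    rw [hmapdetq] at this
    exact this
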